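/- (Total length of an inwinding spiral) Assume |α| < 1, |β| < 1 and d < 1. Then the infinite series Σ_{k=0}^{∞} G k converges, a + b − 1 ≠ 0, and Σ_{k=0}^{∞} G k = (1/(a + b − 1)) · ( (a − 1)·G 0 − G 1 − c·d²/(1 − d) ). -/

import Mathlib

theorem stmt_14 (a b c d : ℝ) (ha : 0 < a) (hb : 0 < b) (hc : 0 ≤ c) (hd : 0 ≤ d)
    (hden : d^2 - a*d - b ≠ 0)
    (α β : ℝ)
    (hα : α = (a + Real.sqrt (a^2 + 4*b)) / 2)
    (hβ : β = (a - Real.sqrt (a^2 + 4*b)) / 2)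
    (hαlt : |α| < 1) (hβlt : |β| < 1) (hdlt : d < 1)
    (G : ℕ → ℝ)
    (hG : ∀ n : ℕ, 2 ≤ n → G n = a * G (n-1) + b * G (n-2) + c * d^n) :
    Summable G ∧ a + b - 1 ≠ 0 ∧
      ∑' k : ℕ, G k
        = (1 / (a + b - 1)) * ((a - 1) * G 0 - G 1 - c * d^2 / (1 - d)) := by
  have hsa0 : (0:ℝ) ≤ a^2 + 4*b := by positivity
  have hsa : Real.sqrt (a^2+4*b) ^ 2 = a^2 + 4*b := Real.sq_sqrt hsa0
  have hsum_ab : α + β = a := by rw [hα, hβ]; ring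
  have hprod : α * β = -b := by
    rw [hα, hβ]; linear_combination -hsa / 4
  have hα0 : 0 < α := by
    rw [hα]; have := Real.sqrt_nonneg (a^2+4*b); linarith
  have hβ0 : β < 0 := by nlinarith [hα0, hprod]
  have hα1 : α < 1 := lt_of_abs_lt hαlt
  -- a + b < 1
  have hab1 : 1 - a - b = (1 - α) * (1 - β) := by linear_combination hsum_ab - hprod
  have hab : a + b < 1 := by nlinarith [mul_pos (by linarith : (0:ℝ) < 1 - α) (by linarith : (0:ℝ) < 1 - β)]
  have habne : a + b - 1 ≠ 0 := by intro h; linarith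
  -- the ratio r
  set r : ℝ := (max α d + 1)/2 with hrdef
  have hmaxα : α ≤ max α d := le_max_left _ _
  have hmaxd : d ≤ max α d := le_max_right _ _
  have hmax1 : max α d < 1 := max_lt hα1 hdlt
  have hr0 : 0 < r := by rw [hrdef]; linarith
  have hr1 : r < 1 := by rw [hrdef]; linarith
  have hrα : α < r := by rw [hrdef]; linarith
  have hrd : d < r := by rw [hrdef]; linarith
  have hrβ : β < r := by linarith
  have hid : r^2 - a*r - b = (r - α) * (r - β) := by linear_combination r * hsum_ab - hprod
  have hq : a*r + b < r^2 := by nlinarith [mul_pos (by linarith : (0:ℝ) < r - α) (by linarith : (0:ℝ) < r - β)]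
  set q : ℝ := (a*r+b)/r^2 with hqdef
  have hr2 : (0:ℝ) < r^2 := by positivity
  have hq1 : q < 1 := (div_lt_one hr2).2 hq
  have hq0 : 0 ≤ q := div_nonneg (by nlinarith) hr2.le
  have hqr : q * r^2 = a*r + b := by rw [hqdef, div_mul_cancel₀ _ hr2.ne']
  set M : ℝ := max (|G 0|) (|G 1|/r) + c/(1-q) with hMdef
  have h1q : (0:ℝ) < 1 - q := by linarith
  have hcq : 0 ≤ c/(1-q) := div_nonneg hc h1q.le
  have hM0 : |G 0| ≤ M := by
    have := le_max_left (|G 0|) (|G 1|/r); rw [hMdef]; linarith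
  have hMnn : 0 ≤ M := le_trans (abs_nonneg _) hM0
  have hM1 : |G 1| ≤ M * r := by
    have h1 : |G 1| / r ≤ M := by
      rw [hMdef]; have := le_max_right (|G 0|) (|G 1|/r); linarith
    calc |G 1| = |G 1|/r * r := by field_simp
    _ ≤ M * r := mul_le_mul_of_nonneg_right h1 hr0.le
  have hMc : q * M + c ≤ M := by
    have h1 : c/(1-q) ≤ M := by
      rw [hMdef]
      exact le_add_of_nonneg_left (le_trans (abs_nonneg _) (le_max_left _ _))
    rw [div_le_iff₀ h1q] at h1
    calc q * M + c ≤ q * M + M * (1 - q) := by linarith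
      _ = M := by ring
  -- geometric bound
  have key : ∀ n, |G n| ≤ M * r^n ∧ |G (n+1)| ≤ M * r^(n+1) := by
    intro n
    induction n with
    | zero => exact ⟨by simpa using hM0, by simpa using hM1⟩
    | succ k ih =>
      refine ⟨ih.2, ?_⟩
      have hrec : G (k+2) = a * G (k+1) + b * G k + c * d^(k+2) := by
        have := hG (k+2) (by omega)
        simpa using this
      have habs : |G (k+2)| ≤ a * |G (k+1)| + b * |G k| + c * d^(k+2) := by
        rw [hrec]
        calc |a * G (k+1) + b * G k + c * d^(k+2)|
            ≤ |a * G (k+1) + b * G k| + |c * d^(k+2)| := abs_add_le _ _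
          _ ≤ |a * G (k+1)| + |b * G k| + |c * d^(k+2)| := by linarith [abs_add_le (a * G (k+1)) (b * G k)]
          _ = a * |G (k+1)| + b * |G k| + c * d^(k+2) := by
              rw [abs_mul, abs_mul, abs_mul, abs_of_pos ha, abs_of_pos hb,
                abs_of_nonneg hc, abs_of_nonneg (pow_nonneg hd _)]
      have hdr : d^(k+2) ≤ r^(k+2) := pow_le_pow_left₀ hd hrd.le _
      have step1 : a * |G (k+1)| + b * |G k| + c * d^(k+2)
          ≤ a * (M * r^(k+1)) + b * (M * r^k) + c * r^(k+2) := by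
        have t1 := mul_le_mul_of_nonneg_left ih.2 ha.le
        have t2 := mul_le_mul_of_nonneg_left ih.1 hb.le
        have t3 := mul_le_mul_of_nonneg_left hdr hc
        linarith
      have step2 : a * (M * r^(k+1)) + b * (M * r^k) + c * r^(k+2) ≤ M * r^(k+2) := by
        have heq2 : a * (M * r^(k+1)) + b * (M * r^k) + c * r^(k+2)
            = (q * M + c) * r^(k+2) := by
          linear_combination (-(M * r^k)) * hqr
        rw [heq2]
        exact mul_le_mul_of_nonneg_right hMc (by positivity)
      show |G (k+1+1)| ≤ M * r^(k+1+1)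
      calc |G (k+2)| ≤ a * |G (k+1)| + b * |G k| + c * d^(k+2) := habs
        _ ≤ M * r^(k+2) := le_trans step1 step2
  -- summability
  have hgeo : Summable (fun n : ℕ => M * r^n) :=
    (summable_geometric_of_lt_one hr0.le hr1).mul_left M
  have habs_sum : Summable (fun n => |G n|) :=
    Summable.of_nonneg_of_le (fun n => abs_nonneg _) (fun n => (key n).1) hgeo
  have hsum : Summable G := summable_abs_iff.1 habs_sum
  refine ⟨hsum, habne, ?_⟩
  -- sum computation
  have hsum1 : Summable (fun n => G (n+1)) := (summable_nat_add_iff 1).2 hsum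
  have hsum2 : Summable (fun n => G (n+2)) := (summable_nat_add_iff 2).2 hsum
  set S := ∑' k : ℕ, G k with hS
  set T1 := ∑' n : ℕ, G (n+1) with hT1
  set T2 := ∑' n : ℕ, G (n+2) with hT2
  have e0 : S = G 0 + T1 := Summable.tsum_eq_zero_add hsum
  have e1 : T1 = G 1 + T2 := by
    have := Summable.tsum_eq_zero_add hsum1
    simpa using this
  have heq : ∀ n : ℕ, G (n+2) = a * G (n+1) + b * G n + c * d^2 * d^n := by
    intro n
    have h := hG (n+2) (by omega)
    simp only [show n+2-1 = n+1 from rfl, show n+2-2 = n from rfl] at h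
    rw [h]; ring
  have hd1 : (1:ℝ) - d ≠ 0 := by intro h; linarith
  have hgd : Summable (fun n : ℕ => c * d^2 * d^n) :=
    (summable_geometric_of_lt_one hd hdlt).mul_left _
  have e2 : T2 = a * T1 + b * S + c * d^2 / (1 - d) := by
    rw [hT2, tsum_congr heq]
    rw [Summable.tsum_add (((hsum1.mul_left a).add (hsum.mul_left b))) hgd]
    rw [Summable.tsum_add (hsum1.mul_left a) (hsum.mul_left b)]
    rw [tsum_mul_left]
    rw [tsum_mul_left]
    rw [tsum_mul_left]
    rw [tsum_geometric_of_lt_one hd hdlt]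
    rw [hS, hT1]
    ring
  have e2' : (1-d) * T2 = (1-d) * (a * T1 + b * S) + c * d^2 := by
    rw [e2]; field_simp
  have hfin : S * (a+b-1) * (1-d) = (1-d) * ((a-1) * G 0 - G 1) - c * d^2 := by
    linear_combination ((1-d)*(a-1)) * e0 + (d-1) * e1 + (-1 : ℝ) * e2'
  field_simp
  linear_combination hfin
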